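/- Let (X,*) be a quasigroup quandle and fix an element d₀ ∈ X. Let R be the subgroup of C₂ = ℤ⟨X×X⟩ generated by all elements (a,a), all elements (d₀,a), and all elements ∂₃(a,b,c) for a,b,c ∈ X. Then for every c ∈ X, the generator (c,d₀) lies in R; that is, the class of (c,d₀) in C₂/R is zero. -/

import Mathlib

open FreeAbelianGroup

/-- **Proposition.** Let `(X, op)` be a quasigroup quandle and fix `d₀ ∈ X`.
Let `R` be the subgroup of `C₂ = ℤ⟨X × X⟩` generated by all `(a, a)`, all `(d₀, a)`,
and all `∂₃(a, b, c)`.  Then for every `c ∈ X` the generator `(c, d₀)` lies in `R`;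
that is, the class of `(c, d₀)` in `C₂/R` is zero. -/
theorem generator_with_second_coordinate_basepoint_mem_relations
    {X : Type*} (op : X → X → X)
    (hidem : ∀ a, op a a = a)
    (hinv : ∀ b, Function.Bijective fun x => op x b)
    (hdist : ∀ a b c, op (op a b) c = op (op a c) (op b c))
    (hquasi : ∀ a b, ∃! c, op a c = b)
    (d₀ : X)
    (d3 : FreeAbelianGroup (X × X × X) →+ FreeAbelianGroup (X × X))
    (hd3 : d3 = FreeAbelianGroup.lift fun p : X × X × X =>
      of (p.1, p.2.2) - of (op p.1 p.2.1, p.2.2) - of (p.1, p.2.1)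
        + of (op p.1 p.2.2, op p.2.1 p.2.2))
    (R : AddSubgroup (FreeAbelianGroup (X × X)))
    (hR : R = AddSubgroup.closure
      ((Set.range fun a : X => of (a, a)) ∪ (Set.range fun a : X => of (d₀, a)) ∪
        (Set.range fun q : X × X × X => d3 (of q)))) :
    ∀ c : X, of (c, d₀) ∈ R := by
  intro c
  obtain ⟨y, hy, -⟩ := hquasi d₀ c
  have h1 : of (d₀, d₀) ∈ R :=
    hR ▸ AddSubgroup.subset_closure (Or.inl (Or.inl ⟨d₀, rfl⟩))
  have h2 : of (d₀, y) ∈ R :=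
    hR ▸ AddSubgroup.subset_closure (Or.inl (Or.inr ⟨y, rfl⟩))
  have h3 : of (d₀, op y d₀) ∈ R :=
    hR ▸ AddSubgroup.subset_closure (Or.inl (Or.inr ⟨op y d₀, rfl⟩))
  have h4 : d3 (of (d₀, y, d₀)) ∈ R :=
    hR ▸ AddSubgroup.subset_closure (Or.inr ⟨(d₀, y, d₀), rfl⟩)
  have key : of (c, d₀) =
      of (d₀, d₀) + of (d₀, op y d₀) - of (d₀, y) - d3 (of (d₀, y, d₀)) := by
    rw [hd3, FreeAbelianGroup.lift_apply_of]
    simp only [hidem d₀, hy]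
    abel
  rw [key]
  exact sub_mem (sub_mem (add_mem h1 h3) h2) h4
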